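/- Let $(X_n,Y_n)$ be the augmented MH chain started in stationarity ($(X_1,Y_1)\sim\nu$), $f \in L^1(\mu)$, and $h(x,y) = \bar\rho(x,y)(f(y)-\mathbb E_\mu(f))$ with $h \in L^2(\nu)$. Then for every $k \geq 1$, $\mathrm{Cov}(h(X_1,Y_1), h(X_{1+k},Y_{1+k})) = 0$, and $\mathrm{Var}(h(X_1,Y_1)) = Z^2 \sigma_A^2(f)$ where $\sigma_A^2(f) = \int_G\int_G (f(y)-\mathbb E_\mu(f))^2 \frac{d\mu}{dP(x,\cdot)}(y)\, \mu(dy)\mu(dx)$. -/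

import Mathlib

open MeasureTheory ProbabilityTheory ENNReal Filter
open scoped NNReal

/-- The process `W` is a time-homogeneous Markov chain with transition kernel `κ`
under `Pr`: the conditional expectation of `1_A (W (n+1))` given the natural
σ-algebra generated by `W 0, …, W n` is `(κ (W n) A).toReal`. -/
def IsMarkovChain {S Ω : Type*} [MeasurableSpace S] [mΩ : MeasurableSpace Ω]
    (Pr : Measure Ω) (κ : Kernel S S) (W : ℕ → Ω → S) : Prop :=
  (∀ n, Measurable (W n)) ∧
  ∀ (n : ℕ) (A : Set S), MeasurableSet A →
    (Pr[fun ω => Set.indicator A (fun _ => (1 : ℝ)) (W (n + 1) ω) |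
        ⨆ i ∈ Finset.range (n + 1), MeasurableSpace.comap (W i) inferInstance])
      =ᵐ[Pr] fun ω => (κ (W n ω) A).toReal

/-- For the stationary augmented MH chain and
h(x,y) = ρ̄(x,y)(f(y)-E_μ f) ∈ L²(ν): all lag-k covariances of h along the chain
vanish, and Var(h(X₁,Y₁)) = Z² σ_A²(f). -/
theorem mh_importance_sampling_zero_covariance
    {G : Type*} [MeasurableSpace G]
    (μ₀ : Measure G) [SigmaFinite μ₀]
    (ρ : G → ℝ) (hρm : Measurable ρ) (hρ0 : ∀ x, 0 ≤ ρ x) (hρint : Integrable ρ μ₀)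
    (Z : ℝ) (hZ : Z = ∫ x, ρ x ∂μ₀) (hZpos : 0 < Z)
    (μ : Measure G) [SFinite μ]
    (hμ : μ = μ₀.withDensity fun x => ENNReal.ofReal (ρ x / Z))
    (P : Kernel G G) [IsMarkovKernel P]
    (p : G → G → ℝ) (hpm : Measurable (Function.uncurry p)) (hp0 : ∀ x y, 0 ≤ p x y)
    (hP : ∀ x, P x = μ₀.withDensity fun y => ENNReal.ofReal (p x y))
    (hpos : ∀ x y, 0 < ρ y → 0 < p x y)
    (bar : G → G → ℝ) (hbar : ∀ x y, bar x y = if 0 < ρ y then ρ y / p x y else 0)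
    (r : G → G → ℝ)
    (hr : ∀ x y, r x y = if 0 < ρ x * p x y then ρ y * p y x / (ρ x * p x y) else 1)
    (α : G → G → ℝ) (hα : ∀ x y, α x y = min 1 (r x y))
    (K : Kernel G G) [IsMarkovKernel K]
    (hK : ∀ x, K x = (P x).withDensity (fun y => ENNReal.ofReal (α x y)) +
      ENNReal.ofReal (∫ y, (1 - α x y) ∂(P x)) • Measure.dirac x)
    (Kaug : Kernel (G × G) (G × G)) [IsMarkovKernel Kaug]
    (hKaug : ∀ x y, Kaug (x, y) =
      ENNReal.ofReal (α x y) • ((Measure.dirac y).prod (P y)) +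
      ENNReal.ofReal (1 - α x y) • ((Measure.dirac x).prod (P x)))
    (ν : Measure (G × G)) (hν : ν = μ.compProd P)
    {Ω : Type*} [MeasurableSpace Ω] (Pr : Measure Ω) [IsProbabilityMeasure Pr]
    (W : ℕ → Ω → G × G) (hW : IsMarkovChain Pr Kaug W)
    (hstart : Pr.map (W 0) = ν)
    (f : G → ℝ) (hfm : Measurable f) (hf : Integrable f μ)
    (hh : MemLp (fun q : G × G => bar q.1 q.2 * (f q.2 - ∫ z, f z ∂μ)) 2 ν) :
    (∀ k, 1 ≤ k →
      (∫ ω, (bar (W 0 ω).1 (W 0 ω).2 * (f (W 0 ω).2 - ∫ z, f z ∂μ)) *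
          (bar (W k ω).1 (W k ω).2 * (f (W k ω).2 - ∫ z, f z ∂μ)) ∂Pr) -
        (∫ ω, bar (W 0 ω).1 (W 0 ω).2 * (f (W 0 ω).2 - ∫ z, f z ∂μ) ∂Pr) *
        (∫ ω, bar (W k ω).1 (W k ω).2 * (f (W k ω).2 - ∫ z, f z ∂μ) ∂Pr) = 0) ∧
    (∫ ω, (bar (W 0 ω).1 (W 0 ω).2 * (f (W 0 ω).2 - ∫ z, f z ∂μ))^2 ∂Pr) -
      (∫ ω, bar (W 0 ω).1 (W 0 ω).2 * (f (W 0 ω).2 - ∫ z, f z ∂μ) ∂Pr)^2 =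
      Z^2 * ∫ x, ∫ y, (f y - ∫ z, f z ∂μ)^2 * (bar x y / Z) ∂μ ∂μ := by
  classical
  obtain ⟨hWm, hWc⟩ := hW
  set c : ℝ := ∫ z, f z ∂μ with hcdef
  set h : G × G → ℝ := fun q => bar q.1 q.2 * (f q.2 - c) with hhdef
  -- basic measurability
  have hbarm : Measurable (Function.uncurry bar) := by
    have e : Function.uncurry bar = fun q : G × G =>
        if 0 < ρ q.2 then ρ q.2 / p q.1 q.2 else 0 := by
      funext q; exact hbar q.1 q.2
    rw [e]
    exact Measurable.ite (measurableSet_lt measurable_const (hρm.comp measurable_snd))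
      ((hρm.comp measurable_snd).div hpm) measurable_const
  have hhm : Measurable h :=
    hbarm.mul ((hfm.comp measurable_snd).sub measurable_const)
  have hrm : Measurable (Function.uncurry r) := by
    have e : Function.uncurry r = fun q : G × G =>
        if 0 < ρ q.1 * p q.1 q.2 then ρ q.2 * p (q.2) (q.1) / (ρ q.1 * p q.1 q.2) else 1 := by
      funext q; exact hr q.1 q.2
    rw [e]
    have hps : Measurable fun q : G × G => p q.2 q.1 := hpm.comp measurable_swap
    exact Measurable.ite
      (measurableSet_lt measurable_const ((hρm.comp measurable_fst).mul hpm))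
      (((hρm.comp measurable_snd).mul hps).div ((hρm.comp measurable_fst).mul hpm))
      measurable_const
  have hαm : Measurable (Function.uncurry α) := by
    have e : Function.uncurry α = fun q : G × G => min 1 (Function.uncurry r q) := by
      funext q; exact hα q.1 q.2
    rw [e]; exact measurable_const.min hrm
  have hr0 : ∀ x y, 0 ≤ r x y := by
    intro x y; rw [hr]
    split_ifs with hxy
    · exact div_nonneg (mul_nonneg (hρ0 y) (hp0 y x)) hxy.le
    · norm_num
  have hα0 : ∀ x y, 0 ≤ α x y := fun x y => by
    rw [hα]; exact le_min zero_le_one (hr0 x y)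
  have hα1 : ∀ x y, α x y ≤ 1 := fun x y => by rw [hα]; exact min_le_left _ _
  -- detailed balance
  have hdb : ∀ x y, α x y * (ρ x * p x y) = α y x * (ρ y * p y x) := by
    intro x y
    have key : ∀ a b : ℝ, 0 < a → min 1 (b / a) * a = min a b := by
      intro a b ha
      rw [min_mul_of_nonneg _ _ ha.le, one_mul, div_mul_cancel₀ _ ha.ne']
    by_cases hxy : 0 < ρ x * p x y <;> by_cases hyx : 0 < ρ y * p y x
    · rw [hα, hα, hr, hr, if_pos hxy, if_pos hyx, key _ _ hxy, key _ _ hyx, min_comm]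
    · have h0 : ρ y * p y x = 0 :=
        le_antisymm (not_lt.mp hyx) (mul_nonneg (hρ0 y) (hp0 y x))
      rw [hα, hr, if_pos hxy, h0]
      simp [h0]
    · have h0 : ρ x * p x y = 0 :=
        le_antisymm (not_lt.mp hxy) (mul_nonneg (hρ0 x) (hp0 x y))
      rw [hα y x, hr y x, if_pos hyx, h0]
      simp [h0]
    · have h0 : ρ x * p x y = 0 :=
        le_antisymm (not_lt.mp hxy) (mul_nonneg (hρ0 x) (hp0 x y))
      have h0' : ρ y * p y x = 0 :=
        le_antisymm (not_lt.mp hyx) (mul_nonneg (hρ0 y) (hp0 y x))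
      rw [h0, h0']; ring
  -- p * bar = ρ
  have hpb : ∀ x y, p x y * bar x y = ρ y := by
    intro x y
    rw [hbar]
    by_cases hy : 0 < ρ y
    · rw [if_pos hy, mul_div_cancel₀ _ (hpos x y hy).ne']
    · rw [if_neg hy, mul_zero]
      exact le_antisymm (hρ0 y) (not_lt.mp hy)
  have hZ0 : Z ≠ 0 := hZpos.ne'
  -- integral transfer lemmas
  have hPint : ∀ (x : G) (g : G → ℝ), ∫ y, g y ∂(P x) = ∫ y, p x y * g y ∂μ₀ := by
    intro x g
    have hmeas : Measurable fun y => (p x y).toNNReal :=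
      (hpm.comp measurable_prodMk_left).real_toNNReal
    rw [hP x]
    have e : (fun y => ENNReal.ofReal (p x y)) =
        fun y => (((fun y => (p x y).toNNReal) y : ℝ≥0) : ℝ≥0∞) := rfl
    rw [e, integral_withDensity_eq_integral_smul hmeas g]
    congr 1; funext y
    rw [NNReal.smul_def, Real.coe_toNNReal _ (hp0 x y), smul_eq_mul]
  have hμint : ∀ g : G → ℝ, ∫ y, g y ∂μ = ∫ y, (ρ y / Z) * g y ∂μ₀ := by
    intro g
    have hmeas : Measurable fun y => (ρ y / Z).toNNReal :=
      (hρm.div_const Z).real_toNNReal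
    rw [hμ]
    have e : (fun y => ENNReal.ofReal (ρ y / Z)) =
        fun y => (((fun y => (ρ y / Z).toNNReal) y : ℝ≥0) : ℝ≥0∞) := rfl
    rw [e, integral_withDensity_eq_integral_smul hmeas g]
    congr 1; funext y
    rw [NNReal.smul_def, Real.coe_toNNReal _ (div_nonneg (hρ0 y) hZpos.le), smul_eq_mul]
  have hPIntIff : ∀ (x : G) (g : G → ℝ),
      Integrable g (P x) ↔ Integrable (fun y => p x y * g y) μ₀ := by
    intro x g
    have hmeas : Measurable fun y => (p x y).toNNReal :=
      (hpm.comp measurable_prodMk_left).real_toNNReal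
    rw [hP x]
    have e : (fun y => ENNReal.ofReal (p x y)) =
        fun y => (((fun y => (p x y).toNNReal) y : ℝ≥0) : ℝ≥0∞) := rfl
    rw [e, integrable_withDensity_iff_integrable_smul hmeas]
    have e2 : ∀ y : G, (((p x y).toNNReal : ℝ≥0) : ℝ) = p x y :=
      fun y => Real.coe_toNNReal _ (hp0 x y)
    simp only [NNReal.smul_def, e2, smul_eq_mul]
  have hμIntIff : ∀ g : G → ℝ,
      Integrable g μ ↔ Integrable (fun y => (ρ y / Z) * g y) μ₀ := by
    intro g
    have hmeas : Measurable fun y => (ρ y / Z).toNNReal :=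
      (hρm.div_const Z).real_toNNReal
    rw [hμ]
    have e : (fun y => ENNReal.ofReal (ρ y / Z)) =
        fun y => (((fun y => (ρ y / Z).toNNReal) y : ℝ≥0) : ℝ≥0∞) := rfl
    rw [e, integrable_withDensity_iff_integrable_smul hmeas]
    have e2 : ∀ y : G, (((ρ y / Z).toNNReal : ℝ≥0) : ℝ) = ρ y / Z :=
      fun y => Real.coe_toNNReal _ (div_nonneg (hρ0 y) hZpos.le)
    simp only [NNReal.smul_def, e2, smul_eq_mul]
  -- the key importance-sampling identity
  have hbarP : ∀ (x : G) (g : G → ℝ),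
      ∫ y, bar x y * g y ∂(P x) = Z * ∫ y, g y ∂μ := by
    intro x g
    rw [hPint x (fun y => bar x y * g y), hμint g, ← integral_const_mul]
    congr 1; funext y
    rw [← mul_assoc, hpb x y]
    field_simp
  have hbarPInt : ∀ (x : G) (g : G → ℝ), Integrable g μ →
      Integrable (fun y => bar x y * g y) (P x) := by
    intro x g hg
    rw [hPIntIff]
    have e : (fun y => p x y * (bar x y * g y)) = fun y => Z * ((ρ y / Z) * g y) := by
      funext y; rw [← mul_assoc, hpb x y]; field_simp
    rw [e]
    exact ((hμIntIff g).mp hg).const_mul Z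
  -- μ, ν are probability measures
  have hμprob : IsProbabilityMeasure μ := by
    constructor
    rw [hμ, withDensity_apply _ MeasurableSet.univ, Measure.restrict_univ]
    have hint : Integrable (fun x => ρ x / Z) μ₀ := hρint.div_const Z
    rw [← ofReal_integral_eq_lintegral_ofReal hint
        (Filter.Eventually.of_forall fun x => div_nonneg (hρ0 x) hZpos.le)]
    rw [integral_div, ← hZ, div_self hZ0, ENNReal.ofReal_one]
  have hνprob : IsProbabilityMeasure ν := by rw [hν]; infer_instance
  have hfc : Integrable (fun y => f y - c) μ := hf.sub (integrable_const c)
  have hfc0 : ∫ y, (f y - c) ∂μ = 0 := by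
    rw [integral_sub hf (integrable_const c), integral_const]
    simp [hcdef]
  -- h has zero conditional kernel mean
  have hKh : ∀ z : G × G, ∫ q, h q ∂(Kaug z) = 0 := by
    rintro ⟨x, y⟩
    rw [hKaug x y]
    have hd : ∀ u : G, ((Measure.dirac u).prod (P u)) = (P u).map (Prod.mk u) :=
      fun u => Measure.dirac_prod u
    have hint : ∀ u : G, Integrable h ((Measure.dirac u).prod (P u)) := by
      intro u
      rw [hd u]
      rw [integrable_map_measure hhm.aestronglyMeasurable measurable_prodMk_left.aemeasurable]
      exact hbarPInt u (fun t => f t - c) hfc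
    have hval : ∀ u : G, ∫ q, h q ∂((Measure.dirac u).prod (P u)) = 0 := by
      intro u
      rw [hd u, integral_map measurable_prodMk_left.aemeasurable hhm.aestronglyMeasurable]
      have : ∫ t, h (u, t) ∂(P u) = Z * ∫ t, (f t - c) ∂μ := hbarP u (fun t => f t - c)
      rw [this, hfc0, mul_zero]
    rw [integral_add_measure ((hint y).smul_measure ENNReal.ofReal_ne_top)
        ((hint x).smul_measure ENNReal.ofReal_ne_top),
      integral_smul_measure, integral_smul_measure, hval x, hval y]
    simp
  -- stationarity of ν under Kaug
  have hbind : ν.bind Kaug = ν := by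
    have ham : Measurable fun q : G × G => ENNReal.ofReal (α q.1 q.2) := hαm.ennreal_ofReal
    ext A hA
    have hQm : Measurable fun x => P x (Prod.mk x ⁻¹' A) :=
      Kernel.measurable_kernel_prodMk_left hA
    set Q : G → ℝ≥0∞ := fun x => P x (Prod.mk x ⁻¹' A) with hQ
    set a : G → G → ℝ≥0∞ := fun x y => ENNReal.ofReal (α x y) with ha
    have ha1 : ∀ x y, a x y ≤ 1 := fun x y => ENNReal.ofReal_le_one.mpr (hα1 x y)
    have haxm : ∀ x, Measurable fun y => a x y := fun x => ham.comp measurable_prodMk_left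
    have hKone : ∀ x y : G, Kaug (x, y) A = a x y * Q y + (1 - a x y) * Q x := by
      intro x y
      rw [hKaug x y]
      have e1 : ((Measure.dirac y).prod (P y)) A = Q y := by
        rw [Measure.dirac_prod, Measure.map_apply measurable_prodMk_left hA]
      have e2 : ((Measure.dirac x).prod (P x)) A = Q x := by
        rw [Measure.dirac_prod, Measure.map_apply measurable_prodMk_left hA]
      rw [Measure.add_apply, Measure.smul_apply, Measure.smul_apply, e1, e2,
        smul_eq_mul, smul_eq_mul]
      congr 1
      rw [ENNReal.ofReal_sub _ (hα0 x y), ENNReal.ofReal_one]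
    set S : G → ℝ≥0∞ := fun x => ∫⁻ y, a x y ∂(P x) with hS
    have hSm : Measurable S := Measurable.lintegral_kernel_prod_right ham
    have hS1 : ∀ x, S x ≤ 1 := by
      intro x
      calc S x ≤ ∫⁻ _, 1 ∂(P x) := lintegral_mono fun y => ha1 x y
        _ = 1 := by rw [lintegral_one, measure_univ]
    have hQ1 : ∀ x, Q x ≤ 1 := fun x => prob_le_one
    rw [Measure.bind_apply hA (Kernel.measurable _).aemeasurable]
    have hcp : ∫⁻ z, Kaug z A ∂ν = ∫⁻ x, ∫⁻ y, Kaug (x, y) A ∂(P x) ∂μ := by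
      rw [hν]; exact Measure.lintegral_compProd (Kaug.measurable_coe hA)
    rw [hcp]
    have hsplit : ∀ x, ∫⁻ y, Kaug (x, y) A ∂(P x)
        = (∫⁻ y, a x y * Q y ∂(P x)) + Q x * (1 - S x) := by
      intro x
      have hmeas1 : Measurable fun y => a x y * Q y := (haxm x).mul hQm
      have hsub : ∫⁻ y, (1 - a x y) ∂(P x) = 1 - S x := by
        have := lintegral_sub (μ := P x) (f := fun _ => (1 : ℝ≥0∞)) (g := fun y => a x y)
          (haxm x) (ne_of_lt (lt_of_le_of_lt (hS1 x) ENNReal.one_lt_top))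
          (Filter.Eventually.of_forall fun y => ha1 x y)
        rw [this, lintegral_one, measure_univ]
      calc ∫⁻ y, Kaug (x, y) A ∂(P x)
          = ∫⁻ y, (a x y * Q y + (1 - a x y) * Q x) ∂(P x) :=
            lintegral_congr fun y => hKone x y
        _ = (∫⁻ y, a x y * Q y ∂(P x)) + ∫⁻ y, (1 - a x y) * Q x ∂(P x) :=
            lintegral_add_left hmeas1 _
        _ = (∫⁻ y, a x y * Q y ∂(P x)) + (∫⁻ y, (1 - a x y) ∂(P x)) * Q x := by
            rw [lintegral_mul_const' (Q x) _ (ne_of_lt (lt_of_le_of_lt (hQ1 x)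
              ENNReal.one_lt_top))]
        _ = (∫⁻ y, a x y * Q y ∂(P x)) + Q x * (1 - S x) := by
            rw [hsub, mul_comm]
    have hT1m : Measurable fun x => ∫⁻ y, a x y * Q y ∂(P x) :=
      Measurable.lintegral_kernel_prod_right (ham.mul (hQm.comp measurable_snd))
    -- transfer double integrals to μ₀ ⊗ μ₀
    have htrans : ∀ F : G → G → ℝ≥0∞, Measurable (fun q : G × G => F q.1 q.2) →
        ∫⁻ x, ∫⁻ y, F x y ∂(P x) ∂μ =
          ∫⁻ x, ∫⁻ y, ENNReal.ofReal (ρ x / Z) *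
            (ENNReal.ofReal (p x y) * F x y) ∂μ₀ ∂μ₀ := by
      intro F hF
      have hμl : ∫⁻ x, ∫⁻ y, F x y ∂(P x) ∂μ =
          ∫⁻ x, ENNReal.ofReal (ρ x / Z) * (∫⁻ y, F x y ∂(P x)) ∂μ₀ := by
        rw [hμ, lintegral_withDensity_eq_lintegral_mul μ₀ (hρm.div_const Z).ennreal_ofReal
          (Measurable.lintegral_kernel_prod_right hF)]
        rfl
      rw [hμl]
      refine lintegral_congr fun x => ?_
      have hpxm : Measurable fun y => ENNReal.ofReal (p x y) :=
        (hpm.comp measurable_prodMk_left).ennreal_ofReal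
      have hFxm : Measurable fun y => F x y := hF.comp measurable_prodMk_left
      have hPl : ∫⁻ y, F x y ∂(P x) = ∫⁻ y, ENNReal.ofReal (p x y) * F x y ∂μ₀ := by
        rw [hP x, lintegral_withDensity_eq_lintegral_mul μ₀ hpxm hFxm]
        rfl
      rw [hPl, ← lintegral_const_mul' _ _ ENNReal.ofReal_ne_top]
    -- detailed balance in ℝ≥0∞
    set e : G → G → ℝ≥0∞ :=
      fun x y => a x y * (ENNReal.ofReal (ρ x) * ENNReal.ofReal (p x y)) with he
    have hem : Measurable fun q : G × G => e q.1 q.2 :=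
      ham.mul (((hρm.comp measurable_fst).ennreal_ofReal).mul hpm.ennreal_ofReal)
    have hesymm : ∀ x y, e x y = e y x := by
      intro x y
      rw [he]
      simp only
      rw [← ENNReal.ofReal_mul (hρ0 x), ← ENNReal.ofReal_mul (hρ0 y), ha]
      simp only
      rw [← ENNReal.ofReal_mul (hα0 x y), ← ENNReal.ofReal_mul (hα0 y x), hdb x y]
    have hZinv : (0 : ℝ) ≤ 1 / Z := by positivity
    have hpoint : ∀ T : G → ℝ≥0∞, ∀ x y : G,
        ENNReal.ofReal (ρ x / Z) * (ENNReal.ofReal (p x y) * (a x y * T y)) =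
          ENNReal.ofReal (1 / Z) * (e x y * T y) := by
      intro T x y
      have : ρ x / Z = 1 / Z * ρ x := by field_simp
      rw [this, ENNReal.ofReal_mul hZinv, he]
      ring
    have key : ∫⁻ x, ∫⁻ y, a x y * Q y ∂(P x) ∂μ =
        ∫⁻ x, ∫⁻ y, a x y * Q x ∂(P x) ∂μ := by
      rw [htrans (fun x y => a x y * Q y) (ham.mul (hQm.comp measurable_snd)),
        htrans (fun x y => a x y * Q x) (ham.mul (hQm.comp measurable_fst))]
      calc ∫⁻ x, ∫⁻ y, ENNReal.ofReal (ρ x / Z) *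
              (ENNReal.ofReal (p x y) * (a x y * Q y)) ∂μ₀ ∂μ₀
          = ∫⁻ x, ∫⁻ y, ENNReal.ofReal (1 / Z) * (e x y * Q y) ∂μ₀ ∂μ₀ :=
            lintegral_congr fun x => lintegral_congr fun y => hpoint Q x y
        _ = ∫⁻ y, ∫⁻ x, ENNReal.ofReal (1 / Z) * (e x y * Q y) ∂μ₀ ∂μ₀ :=
            lintegral_lintegral_swap
              ((measurable_const.mul (hem.mul (hQm.comp measurable_snd))).aemeasurable)
        _ = ∫⁻ x, ∫⁻ y, ENNReal.ofReal (1 / Z) * (e x y * Q x) ∂μ₀ ∂μ₀ := by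
            refine lintegral_congr fun u => lintegral_congr fun v => ?_
            rw [hesymm v u]
        _ = ∫⁻ x, ∫⁻ y, ENNReal.ofReal (ρ x / Z) *
              (ENNReal.ofReal (p x y) * (a x y * Q x)) ∂μ₀ ∂μ₀ := by
            refine lintegral_congr fun x => lintegral_congr fun y => ?_
            rw [hpoint (fun _ => Q x) x y]
    have hT1 : ∫⁻ x, ∫⁻ y, a x y * Q x ∂(P x) ∂μ = ∫⁻ x, Q x * S x ∂μ := by
      refine lintegral_congr fun x => ?_
      rw [lintegral_mul_const' (Q x) _ (ne_of_lt (lt_of_le_of_lt (hQ1 x)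
        ENNReal.one_lt_top)), mul_comm]
    calc ∫⁻ x, ∫⁻ y, Kaug (x, y) A ∂(P x) ∂μ
        = ∫⁻ x, ((∫⁻ y, a x y * Q y ∂(P x)) + Q x * (1 - S x)) ∂μ :=
          lintegral_congr fun x => hsplit x
      _ = (∫⁻ x, ∫⁻ y, a x y * Q y ∂(P x) ∂μ) + ∫⁻ x, Q x * (1 - S x) ∂μ :=
          lintegral_add_left hT1m _
      _ = (∫⁻ x, Q x * S x ∂μ) + ∫⁻ x, Q x * (1 - S x) ∂μ := by rw [key, hT1]
      _ = ∫⁻ x, (Q x * S x + Q x * (1 - S x)) ∂μ :=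
          (lintegral_add_left (hQm.mul hSm) _).symm
      _ = ∫⁻ x, Q x ∂μ := by
          refine lintegral_congr fun x => ?_
          rw [← mul_add, add_tsub_cancel_of_le (hS1 x), mul_one]
      _ = ν A := by rw [hν, Measure.compProd_apply hA]
  -- the filtration
  have hm : ∀ n : ℕ,
      (⨆ i ∈ Finset.range (n + 1), MeasurableSpace.comap (W i) inferInstance) ≤
        (inferInstance : MeasurableSpace Ω) :=
    fun n => iSup_le fun i => iSup_le fun _ => (hWm i).comap_le
  have hSF : ∀ n, SigmaFinite (Pr.trim (hm n)) := fun n => inferInstance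
  -- the one-step Markov property as an identity of measures
  have hstep : ∀ (n : ℕ) (s : Set Ω),
      MeasurableSet[⨆ i ∈ Finset.range (n + 1), MeasurableSpace.comap (W i) inferInstance] s →
      (Pr.restrict s).map (W (n + 1)) = ((Pr.restrict s).map (W n)).bind Kaug := by
    intro n s hs
    haveI := hSF n
    ext A hA
    have hmeasK : Measurable fun ω => Kaug (W n ω) A :=
      (Kaug.measurable_coe hA).comp (hWm n)
    have hrhs_ne : ∫⁻ ω, Kaug (W n ω) A ∂(Pr.restrict s) ≠ ⊤ := by
      have hb : ∫⁻ ω, Kaug (W n ω) A ∂(Pr.restrict s) ≤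
          ∫⁻ _, (1 : ℝ≥0∞) ∂(Pr.restrict s) :=
        lintegral_mono fun ω => prob_le_one
      refine ne_of_lt (lt_of_le_of_lt hb ?_)
      rw [lintegral_one]
      exact measure_lt_top _ _
    rw [Measure.map_apply (hWm (n + 1)) hA, Measure.bind_apply hA (Kernel.measurable _).aemeasurable,
      MeasureTheory.lintegral_map (Kaug.measurable_coe hA) (hWm n)]
    refine (ENNReal.toReal_eq_toReal_iff' (measure_ne_top _ _) hrhs_ne).mp ?_
    have eind : ∀ ω, A.indicator (fun _ => (1 : ℝ)) (W (n + 1) ω) =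
        (W (n + 1) ⁻¹' A).indicator (fun _ => (1 : ℝ)) ω := by
      intro ω
      by_cases hω : W (n + 1) ω ∈ A
      · simp [Set.indicator_of_mem, hω, Set.mem_preimage]
      · simp [Set.indicator_of_notMem, hω, Set.mem_preimage]
    have hint : Integrable (fun ω => A.indicator (fun _ => (1 : ℝ)) (W (n + 1) ω)) Pr := by
      have : (fun ω => A.indicator (fun _ => (1 : ℝ)) (W (n + 1) ω)) =
          (W (n + 1) ⁻¹' A).indicator (fun _ => (1 : ℝ)) := funext eind
      rw [this]
      exact (integrable_const (1 : ℝ)).indicator ((hWm (n + 1)) hA)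
    calc (Pr.restrict s (W (n + 1) ⁻¹' A)).toReal
        = ∫ ω in s, (W (n + 1) ⁻¹' A).indicator (fun _ => (1 : ℝ)) ω ∂Pr := by
          rw [integral_indicator_const (1 : ℝ) ((hWm (n + 1)) hA)]
          simp
          rfl
      _ = ∫ ω in s, A.indicator (fun _ => (1 : ℝ)) (W (n + 1) ω) ∂Pr := by
          refine integral_congr_ae (Filter.Eventually.of_forall fun ω => (eind ω).symm)
      _ = ∫ ω in s, (Kaug (W n ω) A).toReal ∂Pr := by
          rw [← setIntegral_condExp (hm n) hint hs]
          exact integral_congr_ae (ae_restrict_of_ae (hWc n A hA))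
      _ = (∫⁻ ω, Kaug (W n ω) A ∂(Pr.restrict s)).toReal := by
          refine integral_toReal hmeasK.aemeasurable.restrict ?_
          exact Filter.Eventually.of_forall fun ω => measure_lt_top _ _
  -- stationarity of the chain
  have hlaw : ∀ n, Pr.map (W n) = ν := by
    intro n
    induction n with
    | zero => exact hstart
    | succ n ih =>
      have := hstep n Set.univ MeasurableSet.univ
      rw [Measure.restrict_univ] at this
      rw [this, ih, hbind]
  have hInthν : Integrable h ν := hh.integrable one_le_two
  have hIntW : ∀ n, Integrable (fun ω => h (W n ω)) Pr := by
    intro n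
    have h1 : Integrable h (Pr.map (W n)) := by rw [hlaw n]; exact hInthν
    exact (integrable_map_measure hhm.aestronglyMeasurable (hWm n).aemeasurable).mp h1
  have hMemW : ∀ n, MemLp (fun ω => h (W n ω)) 2 Pr := by
    intro n
    have h1 : MemLp h 2 (Pr.map (W n)) := by rw [hlaw n]; exact hh
    exact (memLp_map_measure_iff hhm.aestronglyMeasurable (hWm n).aemeasurable).mp h1
  -- mean of h along the chain is zero
  have hmeanν : ∫ q, h q ∂ν = 0 := by
    have hint : Integrable h (μ.compProd P) := by rw [← hν]; exact hInthν
    rw [hν, Measure.integral_compProd hint]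
    have : ∀ x : G, ∫ y, h (x, y) ∂(P x) = 0 := by
      intro x
      have : ∫ y, h (x, y) ∂(P x) = Z * ∫ t, (f t - c) ∂μ := hbarP x (fun t => f t - c)
      rw [this, hfc0, mul_zero]
    simp only [this, integral_zero]
  have hmean : ∀ n, ∫ ω, h (W n ω) ∂Pr = 0 := by
    intro n
    rw [← integral_map (hWm n).aemeasurable hhm.aestronglyMeasurable, hlaw n, hmeanν]
  -- vanishing conditional expectation
  have hcond : ∀ n : ℕ,
      (Pr[(fun ω => h (W (n + 1) ω)) |
        ⨆ i ∈ Finset.range (n + 1), MeasurableSpace.comap (W i) inferInstance])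
        =ᵐ[Pr] 0 := by
    intro n
    haveI := hSF n
    have hsint : ∀ s : Set Ω,
        MeasurableSet[⨆ i ∈ Finset.range (n + 1),
          MeasurableSpace.comap (W i) inferInstance] s →
        ∫ ω in s, h (W (n + 1) ω) ∂Pr = 0 := by
      intro s hs
      have hmap : ∫ ω in s, h (W (n + 1) ω) ∂Pr =
          ∫ q, h q ∂((Pr.restrict s).map (W (n + 1))) :=
        (integral_map (hWm (n + 1)).aemeasurable hhm.aestronglyMeasurable).symm
      rw [hmap, hstep n s hs]
      set σ := (Pr.restrict s).map (W n) with hσ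
      have hsnd : (σ.compProd Kaug).map Prod.snd = σ.bind Kaug := by
        ext B hB
        rw [Measure.map_apply measurable_snd hB, Measure.compProd_apply (measurable_snd hB),
          Measure.bind_apply hB (Kernel.measurable _).aemeasurable]
        refine lintegral_congr fun z => rfl
      have hIntb : Integrable h (σ.bind Kaug) := by
        rw [← hstep n s hs]
        refine hInthν.mono_measure ?_
        rw [← hlaw (n + 1)]
        exact Measure.map_mono Measure.restrict_le_self (hWm (n + 1))
      have hIntc : Integrable (fun q : (G × G) × (G × G) => h q.2) (σ.compProd Kaug) := by
        have h1 : Integrable h ((σ.compProd Kaug).map Prod.snd) := by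
          rw [hsnd]; exact hIntb
        exact (integrable_map_measure hhm.aestronglyMeasurable
          measurable_snd.aemeasurable).mp h1
      rw [← hsnd, integral_map measurable_snd.aemeasurable hhm.aestronglyMeasurable,
        Measure.integral_compProd hIntc]
      simp [hKh]
    refine ((ae_eq_condExp_of_forall_setIntegral_eq (hm n) (hIntW (n + 1)) ?_ ?_ ?_).symm)
    · intro s _ _
      exact (integrable_zero _ _ _).integrableOn
    · intro s hs _
      rw [hsint s hs]
      simp
    · exact StronglyMeasurable.aestronglyMeasurable stronglyMeasurable_const
  -- covariance part
  have hcov : ∀ k, 1 ≤ k → ∫ ω, h (W 0 ω) * h (W k ω) ∂Pr = 0 := by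
    intro k hk
    obtain ⟨n, rfl⟩ : ∃ n, k = n + 1 := ⟨k - 1, (Nat.succ_pred_eq_of_pos hk).symm⟩
    have hW0m : Measurable[⨆ i ∈ Finset.range (n + 1),
        MeasurableSpace.comap (W i) inferInstance] (W 0) := by
      have h1 : MeasurableSpace.comap (W 0) inferInstance ≤
          ⨆ i ∈ Finset.range (n + 1), MeasurableSpace.comap (W i) inferInstance :=
        by
          refine le_trans ?_ (le_iSup (fun i => ⨆ _ : i ∈ Finset.range (n + 1),
            MeasurableSpace.comap (W i) inferInstance) 0)
          rw [iSup_pos (Finset.mem_range.mpr n.succ_pos)]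
      exact (measurable_iff_comap_le.mpr le_rfl).mono h1 le_rfl
    have hg_sm : StronglyMeasurable[⨆ i ∈ Finset.range (n + 1),
        MeasurableSpace.comap (W i) inferInstance] (fun ω => h (W 0 ω)) :=
      (hhm.comp hW0m).stronglyMeasurable
    have hprod : Integrable ((fun ω => h (W 0 ω)) * (fun ω => h (W (n+1) ω))) Pr := by
      rw [← memLp_one_iff_integrable]
      have := ((hMemW (n+1)).smul (φ := fun ω => h (W 0 ω)) (hMemW 0)
        (r := 1) (hpqr := ⟨by rw [inv_one, ENNReal.inv_two_add_inv_two]⟩))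
      simpa [smul_eq_mul] using this
    calc ∫ ω, h (W 0 ω) * h (W (n+1) ω) ∂Pr
        = ∫ ω, ((fun ω => h (W 0 ω)) * (fun ω => h (W (n+1) ω))) ω ∂Pr := rfl
      _ = ∫ ω, (Pr[(fun ω => h (W 0 ω)) * (fun ω => h (W (n+1) ω)) |
            ⨆ i ∈ Finset.range (n + 1), MeasurableSpace.comap (W i) inferInstance]) ω ∂Pr :=
          (integral_condExp (hm n)).symm
      _ = ∫ ω, ((fun ω => h (W 0 ω)) * (Pr[(fun ω => h (W (n+1) ω)) |
            ⨆ i ∈ Finset.range (n + 1), MeasurableSpace.comap (W i) inferInstance])) ω ∂Pr := by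
          refine integral_congr_ae ?_
          exact condExp_mul_of_stronglyMeasurable_left hg_sm hprod (hIntW (n+1))
      _ = ∫ ω, (0:ℝ) ∂Pr := by
          refine integral_congr_ae ?_
          filter_upwards [hcond n] with ω hω
          simp only [Pi.mul_apply, hω, Pi.zero_apply, mul_zero]
      _ = 0 := integral_zero _ _
  constructor
  · intro k hk
    have e1 : ∫ ω, h (W 0 ω) * h (W k ω) ∂Pr = 0 := hcov k hk
    have e2 : ∫ ω, h (W k ω) ∂Pr = 0 := hmean k
    calc (∫ ω, (bar (W 0 ω).1 (W 0 ω).2 * (f (W 0 ω).2 - c)) *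
          (bar (W k ω).1 (W k ω).2 * (f (W k ω).2 - c)) ∂Pr) -
        (∫ ω, bar (W 0 ω).1 (W 0 ω).2 * (f (W 0 ω).2 - c) ∂Pr) *
        (∫ ω, bar (W k ω).1 (W k ω).2 * (f (W k ω).2 - c) ∂Pr)
        = (∫ ω, h (W 0 ω) * h (W k ω) ∂Pr) -
          (∫ ω, h (W 0 ω) ∂Pr) * (∫ ω, h (W k ω) ∂Pr) := rfl
      _ = 0 := by rw [e1, e2, mul_zero, sub_zero]
  · -- variance part
    have hsq_int : Integrable (fun q : G × G => h q ^ 2) ν := hh.integrable_sq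
    have e0 : ∫ q, h q ^ 2 ∂ν = ∫ ω, (h (W 0 ω)) ^ 2 ∂Pr := by
      rw [← hlaw 0,
        integral_map (hWm 0).aemeasurable (hhm.pow_const 2).aestronglyMeasurable]
    have hinner : ∀ x : G, ∫ y, h (x, y) ^ 2 ∂(P x) =
        Z * ∫ y, bar x y * (f y - c) ^ 2 ∂μ := by
      intro x
      have e1 : ∀ y, h (x, y) ^ 2 = bar x y * (bar x y * (f y - c) ^ 2) := by
        intro y
        show (bar x y * (f y - c)) ^ 2 = _
        ring
      calc ∫ y, h (x, y) ^ 2 ∂(P x)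
          = ∫ y, bar x y * (bar x y * (f y - c) ^ 2) ∂(P x) :=
            integral_congr_ae (Filter.Eventually.of_forall fun y => e1 y)
        _ = Z * ∫ y, bar x y * (f y - c) ^ 2 ∂μ := hbarP x _
    have hνsq : ∫ q, h q ^ 2 ∂ν = Z * ∫ x, ∫ y, bar x y * (f y - c) ^ 2 ∂μ ∂μ := by
      rw [hν, Measure.integral_compProd (by rw [← hν]; exact hsq_int)]
      calc ∫ x, ∫ y, h (x, y) ^ 2 ∂(P x) ∂μ
          = ∫ x, Z * ∫ y, bar x y * (f y - c) ^ 2 ∂μ ∂μ :=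
            integral_congr_ae (Filter.Eventually.of_forall fun x => hinner x)
        _ = Z * ∫ x, ∫ y, bar x y * (f y - c) ^ 2 ∂μ ∂μ := integral_const_mul _ _
    have hrhs : Z ^ 2 * ∫ x, ∫ y, (f y - c) ^ 2 * (bar x y / Z) ∂μ ∂μ =
        Z * ∫ x, ∫ y, bar x y * (f y - c) ^ 2 ∂μ ∂μ := by
      have e2 : (fun x => ∫ y, (f y - c) ^ 2 * (bar x y / Z) ∂μ) =
          fun x => (1 / Z) * ∫ y, bar x y * (f y - c) ^ 2 ∂μ := by
        funext x
        rw [← integral_const_mul]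
        refine integral_congr_ae (Filter.Eventually.of_forall fun y => ?_)
        field_simp
      rw [e2, integral_const_mul]
      field_simp
    have final : (∫ ω, (h (W 0 ω)) ^ 2 ∂Pr) - (∫ ω, h (W 0 ω) ∂Pr) ^ 2 =
        Z ^ 2 * ∫ x, ∫ y, (f y - c) ^ 2 * (bar x y / Z) ∂μ ∂μ := by
      rw [hmean 0, ← e0, hνsq, ← hrhs]
      ring
    exact final
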